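/- arXiv:2410.12884 — 7 statements merged into one kernel-verified Lean document; each statement's English description precedes it below -/
import Mathlib

section
/- An OWA mechanism with n ≥ 2 agents is strategy-proof if and only if there exists an index j with w_j = 1 (i.e., the mechanism is an order statistic). Strategy-proofness means: for every agent i, true peak x_i, misreport x'_i, and profile x_{-i} of other reports, |x_i − f(x_i, x_{-i})| ≤ |x_i − f(x'_i, x_{-i})|. -/
lemma orderstat_le_update {n : ℕ} (x : Fin n → ℝ) (i : Fin n) (c : ℝ) (j : Fin n)
    (h : x i < x (Tuple.sort x j)) :
    x (Tuple.sort x j) ≤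
      (Function.update x i c) (Tuple.sort (Function.update x i c) j) := by
  by_contra hlt
  push_neg at hlt
  set x' := Function.update x i c with hx'
  set m := x (Tuple.sort x j) with hm
  have hA : (Finset.univ.filter (fun k => x k < m)).card ≤ (j : ℕ) := by
    have hsub : (Finset.univ.filter (fun k => x k < m)) ⊆
        (Finset.Iio j).image (Tuple.sort x) := by
      intro k hk
      simp only [Finset.mem_filter] at hk
      rcases (Tuple.sort x).surjective k with ⟨l, rfl⟩
      refine Finset.mem_image.2 ⟨l, ?_, rfl⟩
      simp only [Finset.mem_Iio]
      by_contra hjl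
      push_neg at hjl
      exact absurd (Tuple.monotone_sort x hjl) (not_le.2 hk.2)
    calc _ ≤ ((Finset.Iio j).image (Tuple.sort x)).card := Finset.card_le_card hsub
      _ = (Finset.Iio j).card := Finset.card_image_of_injective _ (Tuple.sort x).injective
      _ = (j:ℕ) := Fin.card_Iio j
  have hB : (j : ℕ) + 1 ≤ (Finset.univ.filter (fun k => x k < m)).card := by
    have hsub : (Finset.Iic j).image (Tuple.sort x') ⊆
        Finset.univ.filter (fun k => x k < m) := by
      intro k hk
      rcases Finset.mem_image.1 hk with ⟨l, hl, rfl⟩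
      simp only [Finset.mem_Iic] at hl
      have h1 : x' (Tuple.sort x' l) ≤ x' (Tuple.sort x' j) := Tuple.monotone_sort x' hl
      have h2 : x' (Tuple.sort x' l) < m := lt_of_le_of_lt h1 hlt
      simp only [Finset.mem_filter, Finset.mem_univ, true_and]
      by_cases hki : Tuple.sort x' l = i
      · rw [hki]; exact h
      · rwa [hx', Function.update_of_ne hki] at h2
    calc (j:ℕ)+1 = (Finset.Iic j).card := (Fin.card_Iic j).symm
      _ = ((Finset.Iic j).image (Tuple.sort x')).card :=
          (Finset.card_image_of_injective _ (Tuple.sort x').injective).symm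
      _ ≤ _ := Finset.card_le_card hsub
  omega

lemma update_orderstat_le {n : ℕ} (x : Fin n → ℝ) (i : Fin n) (c : ℝ) (j : Fin n)
    (h : x (Tuple.sort x j) < x i) :
    (Function.update x i c) (Tuple.sort (Function.update x i c) j)
      ≤ x (Tuple.sort x j) := by
  by_contra hlt
  push_neg at hlt
  set x' := Function.update x i c with hx'
  set m := x (Tuple.sort x j) with hm
  have hA : (Finset.univ.filter (fun k => m < x k)).card ≤ n - 1 - (j : ℕ) := by
    have hsub : (Finset.univ.filter (fun k => m < x k)) ⊆
        (Finset.Ioi j).image (Tuple.sort x) := by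
      intro k hk
      simp only [Finset.mem_filter] at hk
      rcases (Tuple.sort x).surjective k with ⟨l, rfl⟩
      refine Finset.mem_image.2 ⟨l, ?_, rfl⟩
      simp only [Finset.mem_Ioi]
      by_contra hjl
      push_neg at hjl
      exact absurd (Tuple.monotone_sort x hjl) (not_le.2 hk.2)
    calc _ ≤ ((Finset.Ioi j).image (Tuple.sort x)).card := Finset.card_le_card hsub
      _ = (Finset.Ioi j).card := Finset.card_image_of_injective _ (Tuple.sort x).injective
      _ = n - 1 - (j:ℕ) := Fin.card_Ioi j
  have hB : n - (j : ℕ) ≤ (Finset.univ.filter (fun k => m < x k)).card := by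
    have hsub : (Finset.Ici j).image (Tuple.sort x') ⊆
        Finset.univ.filter (fun k => m < x k) := by
      intro k hk
      rcases Finset.mem_image.1 hk with ⟨l, hl, rfl⟩
      simp only [Finset.mem_Ici] at hl
      have h1 : x' (Tuple.sort x' j) ≤ x' (Tuple.sort x' l) := Tuple.monotone_sort x' hl
      have h2 : m < x' (Tuple.sort x' l) := lt_of_lt_of_le hlt h1
      simp only [Finset.mem_filter, Finset.mem_univ, true_and]
      by_cases hki : Tuple.sort x' l = i
      · rw [hki]; exact h
      · rwa [hx', Function.update_of_ne hki] at h2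
    calc n - (j:ℕ) = (Finset.Ici j).card := (Fin.card_Ici j).symm
      _ = ((Finset.Ici j).image (Tuple.sort x')).card :=
          (Finset.card_image_of_injective _ (Tuple.sort x').injective).symm
      _ ≤ _ := Finset.card_le_card hsub
  have := j.isLt
  omega

noncomputable def owa {n : ℕ} (w x : Fin n → ℝ) : ℝ :=
  ∑ j, w j * x (Tuple.sort x j)
theorem owa_strategyproof_iff_order_statistic {n : ℕ} (hn : 2 ≤ n)
    (w : Fin n → ℝ) (hw : ∀ j, w j ∈ Set.Icc (0:ℝ) 1) (hsum : ∑ j, w j = 1) :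
    (∀ x : Fin n → ℝ, (∀ j, x j ∈ Set.Icc (0:ℝ) 1) →
      ∀ i : Fin n, ∀ xi' ∈ Set.Icc (0:ℝ) 1,
        |x i - owa w x| ≤ |x i - owa w (Function.update x i xi')|) ↔
      ∃ j, w j = 1 := by
  constructor
  · -- forward
    intro h
    by_contra hne
    push_neg at hne
    -- find j with 0 < w j < 1
    obtain ⟨j, hj0⟩ : ∃ j, 0 < w j := by
      by_contra hz
      push_neg at hz
      have : ∀ j : Fin n, w j = 0 := fun j => le_antisymm (hz j) (hw j).1
      simp [this] at hsum
    have hj1 : w j < 1 := lt_of_le_of_ne (hw j).2 (hne j)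
    set xp : ℝ → Fin n → ℝ := fun t l =>
      if (l:ℕ) < (j:ℕ) then 0 else if (l:ℕ) = (j:ℕ) then t else 1 with hxp
    have hxpj : ∀ t, xp t j = t := by intro t; simp [hxp]
    have hmono : ∀ t : ℝ, 0 ≤ t → t ≤ 1 → Monotone (xp t) := by
      intro t ht0 ht1 a b hab
      have hab' : (a:ℕ) ≤ (b:ℕ) := hab
      simp only [hxp]
      split_ifs <;> first | linarith | omega
    have hbd : ∀ t : ℝ, 0 ≤ t → t ≤ 1 → ∀ l, xp t l ∈ Set.Icc (0:ℝ) 1 := by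
      intro t ht0 ht1 l
      simp only [hxp]
      split_ifs <;> constructor <;> linarith
    have hupd : ∀ t t' : ℝ, Function.update (xp t) j t' = xp t' := by
      intro t t'
      funext l
      by_cases hl : l = j
      · subst hl; rw [Function.update_self, hxpj]
      · rw [Function.update_of_ne hl]
        have : (l:ℕ) ≠ (j:ℕ) := fun e => hl (Fin.ext e)
        simp only [hxp]
        rw [if_neg (by omega : ¬ ((l:ℕ) = (j:ℕ))), if_neg (by omega : ¬ ((l:ℕ) = (j:ℕ)))]
    set c : ℝ := ∑ l ∈ Finset.univ.filter (fun l : Fin n => (j:ℕ) < (l:ℕ)), w l with hc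
    have hc0 : 0 ≤ c := Finset.sum_nonneg fun l _ => (hw l).1
    have hcw : w j + c ≤ 1 := by
      have hjn : j ∉ Finset.univ.filter (fun l : Fin n => (j:ℕ) < (l:ℕ)) := by simp
      have : ∑ l ∈ insert j (Finset.univ.filter (fun l : Fin n => (j:ℕ) < (l:ℕ))), w l
          = w j + c := Finset.sum_insert hjn
      calc w j + c = _ := this.symm
        _ ≤ ∑ l, w l := Finset.sum_le_sum_of_subset_of_nonneg
              (Finset.subset_univ _) (fun l _ _ => (hw l).1)
        _ = 1 := hsum
    have howa : ∀ t : ℝ, 0 ≤ t → t ≤ 1 → owa w (xp t) = w j * t + c := by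
      intro t ht0 ht1
      have hsort : Tuple.sort (xp t) = Equiv.refl _ :=
        Tuple.sort_eq_refl_iff_monotone.2 (hmono t ht0 ht1)
      unfold owa
      rw [hsort]
      simp only [Equiv.refl_apply]
      have key : ∀ l : Fin n, w l * xp t l =
          (if l = j then w j * t else 0) + (if (j:ℕ) < (l:ℕ) then w l else 0) := by
        intro l
        simp only [hxp]
        rcases lt_trichotomy (l:ℕ) (j:ℕ) with hl | hl | hl
        · rw [if_pos hl, if_neg (fun e => by rw [e] at hl; omega),
            if_neg (by omega)]
          ring
        · have : l = j := Fin.ext hl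
          subst this
          rw [if_neg (by omega), if_pos rfl, if_pos rfl, if_neg (by omega)]
          ring
        · rw [if_neg (by omega), if_neg (by omega),
            if_neg (fun e => by rw [e] at hl; omega), if_pos hl]
          ring
      rw [Finset.sum_congr rfl (fun l _ => key l), Finset.sum_add_distrib,
        Finset.sum_ite_eq' Finset.univ j, if_pos (Finset.mem_univ j),
        ← Finset.sum_filter]
    by_cases hcz : c = 0
    · -- manipulation: peak w j, misreport 1
      have hb := h (xp (w j)) (hbd _ hj0.le hj1.le) j 1 ⟨zero_le_one, le_refl 1⟩
      rw [hupd, hxpj, howa _ hj0.le hj1.le, howa 1 zero_le_one (le_refl 1), hcz] at hb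
      rw [abs_of_nonneg (by nlinarith), abs_of_nonneg (by nlinarith)] at hb
      nlinarith
    · -- c > 0: peak c, misreport 0
      have hcpos : 0 < c := lt_of_le_of_ne hc0 (Ne.symm hcz)
      have hc1 : c ≤ 1 := by linarith
      have hb := h (xp c) (hbd _ hc0 hc1) j 0 ⟨le_refl 0, zero_le_one⟩
      rw [hupd, hxpj, howa _ hc0 hc1, howa 0 (le_refl 0) zero_le_one] at hb
      rw [abs_of_nonpos (by nlinarith), abs_of_nonneg (by nlinarith)] at hb
      nlinarith
  · -- backward
    rintro ⟨j, hj⟩ x _ i xi' _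
    have hzero : ∀ l, l ≠ j → w l = 0 := by
      intro l hl
      have h1 : ∑ k ∈ Finset.univ.erase j, w k = 0 := by
        have h2 := Finset.sum_erase_add Finset.univ w (Finset.mem_univ j)
        rw [hsum, hj] at h2
        linarith
      have := (Finset.sum_eq_zero_iff_of_nonneg (fun k _ => (hw k).1)).1 h1
      exact this l (Finset.mem_erase.2 ⟨hl, Finset.mem_univ l⟩)
    have howa : ∀ y : Fin n → ℝ, owa w y = y (Tuple.sort y j) := by
      intro y
      unfold owa
      rw [Finset.sum_eq_single j]
      · rw [hj, one_mul]
      · intro b _ hb; rw [hzero b hb, zero_mul]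
      · intro hj'; exact absurd (Finset.mem_univ j) hj'
    rw [howa, howa]
    set m := x (Tuple.sort x j)
    set x' := Function.update x i xi'
    set m' := x' (Tuple.sort x' j)
    rcases lt_trichotomy (x i) m with hcmp | hcmp | hcmp
    · have hle : m ≤ m' := orderstat_le_update x i xi' j hcmp
      rw [abs_of_nonpos (by linarith), abs_of_nonpos (by linarith)]
      linarith
    · rw [hcmp, sub_self, abs_zero]; exact abs_nonneg _
    · have hle : m' ≤ m := update_orderstat_le x i xi' j hcmp
      rw [abs_of_nonneg (by linarith), abs_of_nonneg (by linarith)]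
      linarith
end

section
/- If an OWA mechanism has some weight w_j ∈ (0,1) (so no weight equals 1), then it is not strategy-proof: there exist an agent i, a true peak x_i, a misreport x'_i, and a profile x_{-i} of other reports such that |x_i − f(x'_i, x_{-i})| < |x_i − f(x_i, x_{-i})|. -/
lemma owa_of_monotone {n : ℕ} (w f : Fin n → ℝ) (hf : Monotone f) :
    owa w f = ∑ j, w j * f j := by
  unfold owa
  rw [Tuple.sort_eq_refl_iff_monotone.mpr hf]
  rfl

lemma step_monotone {n : ℕ} (k : ℕ) (c : ℝ) (h0 : 0 ≤ c) (h1 : c ≤ 1) :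
    Monotone (fun l : Fin n => if l.val < k then (0:ℝ) else if l.val = k then c else 1) := by
  intro a b hab
  simp only
  have hab' : a.val ≤ b.val := hab
  split_ifs <;> first | linarith | omega

theorem owa_fractional_weight_not_strategyproof {n : ℕ} (hn : 2 ≤ n)
    (w : Fin n → ℝ) (hw : ∀ j, w j ∈ Set.Icc (0:ℝ) 1) (hsum : ∑ j, w j = 1)
    (hfrac : ∃ j, w j ∈ Set.Ioo (0:ℝ) 1) :
    ∃ (x : Fin n → ℝ) (i : Fin n) (xi' : ℝ),
      (∀ j, x j ∈ Set.Icc (0:ℝ) 1) ∧ xi' ∈ Set.Icc (0:ℝ) 1 ∧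
      |x i - owa w (Function.update x i xi')| < |x i - owa w x| := by
  obtain ⟨j, hj0, hj1⟩ := hfrac
  -- the set of indices with positive weight
  set S : Finset (Fin n) := Finset.univ.filter (fun l => 0 < w l) with hS
  have hjS : j ∈ S := by simp [hS, hj0]
  have hSne : S.Nonempty := ⟨j, hjS⟩
  set i : Fin n := S.min' hSne with hi
  have hiS : i ∈ S := S.min'_mem hSne
  have hwi0 : 0 < w i := by simpa [hS] using hiS
  have hmin : ∀ l : Fin n, l < i → w l = 0 := by
    intro l hl
    by_contra h
    have : 0 < w l := lt_of_le_of_ne (hw l).1 (Ne.symm h)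
    have : l ∈ S := by simp [hS, this]
    exact absurd (S.min'_le l this) (not_le.mpr hl)
  have hwi1 : w i < 1 := by
    by_cases hij : i = j
    · exact hij ▸ hj1
    · -- w i + w j ≤ sum = 1 and w j > 0
      have hle : w i + w j ≤ ∑ l, w l := by
        have := Finset.add_sum_erase Finset.univ w (Finset.mem_univ i)
        rw [← this]
        have hjmem : j ∈ Finset.univ.erase i := Finset.mem_erase.mpr ⟨fun h => hij h.symm, Finset.mem_univ j⟩
        have := Finset.single_le_sum (f := w) (fun l _ => (hw l).1) hjmem
        linarith
      rw [hsum] at hle; linarith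
  set a := w i with ha
  -- the profile
  set x : Fin n → ℝ := fun l => if l.val < i.val then (0:ℝ) else if l.val = i.val then 1/2 else 1 with hx
  set x' : Fin n → ℝ := fun l => if l.val < i.val then (0:ℝ) else if l.val = i.val then a/2 else 1 with hx'
  have hxm : Monotone x := step_monotone i.val (1/2) (by norm_num) (by norm_num)
  have hx'm : Monotone x' := step_monotone i.val (a/2) (by linarith) (by linarith)
  have hupd : Function.update x i (a/2) = x' := by
    funext l
    by_cases h : l = i
    · subst h; simp [Function.update, hx']
    · have hne : l.val ≠ i.val := fun hv => h (Fin.ext hv)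
      simp [Function.update, h, hx, hx', hne]
  have hxi : x i = 1/2 := by simp [hx]
  -- sum computations
  -- sum computations
  have key : ∀ (c : ℝ),
      ∑ l, w l * (if l.val < i.val then (0:ℝ) else if l.val = i.val then c else 1)
        = 1 + a * (c - 1) := by
    intro c
    have h1 : ∑ l, w l * ((if l.val < i.val then (0:ℝ) else if l.val = i.val then c else 1) - 1)
        = a * (c - 1) := by
      rw [Finset.sum_eq_single i]
      · simp [ha]
      · intro l _ hl
        rcases lt_or_gt_of_ne hl with h | h
        · rw [hmin l h]; ring
        · have h1 : ¬ l.val < i.val := by omega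
          have h2 : l.val ≠ i.val := by omega
          simp [h1, h2]
      · intro h; exact absurd (Finset.mem_univ i) h
    have h2 : ∑ l, w l * ((if l.val < i.val then (0:ℝ) else if l.val = i.val then c else 1) - 1)
        = (∑ l, w l * (if l.val < i.val then (0:ℝ) else if l.val = i.val then c else 1)) - ∑ l, w l := by
      rw [← Finset.sum_sub_distrib]
      congr 1; funext l; ring
    rw [h2, hsum] at h1
    linarith
  have hox : owa w x = 1 + a * (1/2 - 1) := by
    rw [owa_of_monotone w x hxm]; exact key (1/2)
  have hox' : owa w x' = 1 + a * (a/2 - 1) := by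
    rw [owa_of_monotone w x' hx'm]; exact key (a/2)
  refine ⟨x, i, a/2, ?_, ⟨by linarith, by linarith⟩, ?_⟩
  · intro l
    simp only [hx]
    split_ifs <;> norm_num
  · rw [hupd, hox, hox', hxi]
    have e1 : (1:ℝ)/2 - (1 + a * (a/2 - 1)) = -((1-a)^2/2) := by ring
    have e2 : (1:ℝ)/2 - (1 + a * (1/2 - 1)) = -((1-a)/2) := by ring
    rw [e1, e2, abs_neg, abs_neg, abs_of_nonneg (by positivity),
      abs_of_nonneg (by linarith)]
    nlinarith
end

section
/- Any OWA mechanism with w_1 = w_n = 0 (and n ≥ 3) satisfies NOM-W: for every agent i, true peak x_i, and misreport x'_i, min_{x_{-i}} u(x_i, f(x_i, x_{-i})) ≥ min_{x_{-i}} u(x_i, f(x'_i, x_{-i})). In fact both sides equal min(x_i, 1 − x_i). -/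
/-- The set of utilities agent `i` with true peak `peak` can obtain, over all
profiles in `[0,1]^n` where agent `i` reports `rep`. -/
def utilSet {n : ℕ} (w : Fin n → ℝ) (i : Fin n) (peak rep : ℝ) : Set ℝ :=
  {u : ℝ | ∃ x : Fin n → ℝ, (∀ j, x j ∈ Set.Icc (0:ℝ) 1) ∧ x i = rep ∧
    u = 1 - |peak - owa w x|}

/-- If all coordinates but `i` are `c`, the OWA with zero extreme weights is `c`. -/
lemma owa_update_const {n : ℕ} (hn : 3 ≤ n) (w : Fin n → ℝ)
    (hsum : ∑ j, w j = 1)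
    (h1 : w ⟨0, by have := hn; omega⟩ = 0) (h2 : w ⟨n - 1, by have := hn; omega⟩ = 0)
    (i : Fin n) (rep c : ℝ) :
    owa w (Function.update (fun _ => c) i rep) = c := by
  set x : Fin n → ℝ := Function.update (fun _ => c) i rep with hx
  have hxval : ∀ j, x j = if j = i then rep else c := by
    intro j
    by_cases h : j = i
    · subst h; simp [hx]
    · simp [hx, Function.update_of_ne h, h]
  by_cases hrc : rep = c
  · have : x = fun _ => c := by
      funext j; rw [hxval]; split <;> simp [hrc]
    rw [owa, this]
    simp only [← Finset.sum_mul, hsum, one_mul]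
  · set σ := Tuple.sort x with hσ
    have hmono : Monotone (x ∘ σ) := Tuple.monotone_sort x
    set k := σ.symm i with hk
    have hσk : σ k = i := Equiv.apply_symm_apply σ i
    have hwk : w k = 0 := by
      rcases lt_or_gt_of_ne hrc with hlt | hgt
      · -- rep < c : k must be 0
        have hk0 : k = ⟨0, by omega⟩ := by
          by_contra hne
          have hσ0 : σ ⟨0, by omega⟩ ≠ i := by
            intro h
            exact hne (by rw [hk, ← h, Equiv.symm_apply_apply])
          have h0 : x (σ ⟨0, by omega⟩) = c := by rw [hxval]; simp [hσ0]
          have hle : x (σ ⟨0, by omega⟩) ≤ x (σ k) := hmono (Fin.le_def.mpr (Nat.zero_le _))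
          rw [h0, hσk, hxval, if_pos rfl] at hle
          linarith
        rw [hk0]; exact h1
      · -- rep > c : k must be n-1
        have hkn : k = ⟨n - 1, by omega⟩ := by
          by_contra hne
          have hσn : σ ⟨n - 1, by omega⟩ ≠ i := by
            intro h
            exact hne (by rw [hk, ← h, Equiv.symm_apply_apply])
          have h0 : x (σ ⟨n - 1, by omega⟩) = c := by rw [hxval]; simp [hσn]
          have hle : x (σ k) ≤ x (σ ⟨n - 1, by omega⟩) :=
            hmono (Fin.le_def.mpr (Nat.le_pred_of_lt k.isLt))
          rw [h0, hσk, hxval, if_pos rfl] at hle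
          linarith
        rw [hkn]; exact h2
    have hterm : ∀ j, w j * x (σ j) = w j * c := by
      intro j
      by_cases hj : j = k
      · subst hj; rw [hwk]; ring
      · have : σ j ≠ i := by
          intro h
          exact hj (by rw [hk, ← h, Equiv.symm_apply_apply])
        rw [hxval, if_neg this]
    rw [owa]
    calc ∑ j, w j * x (σ j) = ∑ j, w j * c := Finset.sum_congr rfl fun j _ => hterm j
    _ = c := by rw [← Finset.sum_mul, hsum, one_mul]

lemma sInf_utilSet {n : ℕ} (hn : 3 ≤ n)
    (w : Fin n → ℝ) (hw : ∀ j, w j ∈ Set.Icc (0:ℝ) 1) (hsum : ∑ j, w j = 1)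
    (h1 : w ⟨0, by have := hn; omega⟩ = 0) (h2 : w ⟨n - 1, by have := hn; omega⟩ = 0)
    (i : Fin n) (xi : ℝ) (hxi : xi ∈ Set.Icc (0:ℝ) 1)
    (rep : ℝ) (hrep : rep ∈ Set.Icc (0:ℝ) 1) :
    sInf (utilSet w i xi rep) = min xi (1 - xi) := by
  obtain ⟨hxi0, hxi1⟩ := hxi
  -- lower bound
  have hlb : ∀ u ∈ utilSet w i xi rep, min xi (1 - xi) ≤ u := by
    rintro u ⟨x, hx, hxi', rfl⟩
    have hy0 : 0 ≤ owa w x := by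
      apply Finset.sum_nonneg
      intro j _
      exact mul_nonneg (hw j).1 (hx (Tuple.sort x j)).1
    have hy1 : owa w x ≤ 1 := by
      calc owa w x ≤ ∑ j, w j := by
            apply Finset.sum_le_sum
            intro j _
            nlinarith [(hw j).1, (hx (Tuple.sort x j)).2]
        _ = 1 := hsum
    have habs : |xi - owa w x| ≤ max xi (1 - xi) := by
      rcases le_total (owa w x) xi with h | h
      · rw [abs_of_nonneg (by linarith)]
        exact le_max_of_le_left (by linarith)
      · rw [abs_of_nonpos (by linarith)]
        exact le_max_of_le_right (by linarith)
    have hmm : min xi (1 - xi) = 1 - max xi (1 - xi) := by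
      rcases le_total xi (1 - xi) with h | h
      · rw [min_eq_left h, max_eq_right h]; ring
      · rw [min_eq_right h, max_eq_left h]
    linarith
  -- witness
  set c : ℝ := if xi ≤ 1/2 then 1 else 0 with hc
  have hcmem : c ∈ Set.Icc (0:ℝ) 1 := by
    rw [hc]; split <;> norm_num
  have hcval : 1 - |xi - c| = min xi (1 - xi) := by
    rw [hc]; split <;> rename_i h
    · rw [abs_of_nonpos (by linarith), min_eq_left (by linarith)]; ring
    · rw [abs_of_nonneg (by linarith), min_eq_right (by linarith)]; ring
  have hmem : min xi (1 - xi) ∈ utilSet w i xi rep := by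
    refine ⟨Function.update (fun _ => c) i rep, ?_, Function.update_self _ _ _, ?_⟩
    · intro j
      by_cases h : j = i
      · subst h; simpa using hrep
      · simpa [Function.update_of_ne h] using hcmem
    · rw [owa_update_const hn w hsum h1 h2 i rep c, hcval]
  exact le_antisymm (csInf_le ⟨min xi (1 - xi), hlb⟩ hmem)
    (le_csInf ⟨_, hmem⟩ hlb)

theorem owa_zero_extreme_weights_NOM_worst {n : ℕ} (hn : 3 ≤ n)
    (w : Fin n → ℝ) (hw : ∀ j, w j ∈ Set.Icc (0:ℝ) 1) (hsum : ∑ j, w j = 1)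
    (h1 : w ⟨0, by omega⟩ = 0) (h2 : w ⟨n - 1, by omega⟩ = 0)
    (i : Fin n) (xi : ℝ) (hxi : xi ∈ Set.Icc (0:ℝ) 1)
    (xi' : ℝ) (hxi' : xi' ∈ Set.Icc (0:ℝ) 1) :
    sInf (utilSet w i xi xi) = min xi (1 - xi) ∧
      sInf (utilSet w i xi xi') = min xi (1 - xi) ∧
      sInf (utilSet w i xi xi') ≤ sInf (utilSet w i xi xi) := by
  have hA := sInf_utilSet hn w hw hsum h1 h2 i xi hxi xi hxi
  have hB := sInf_utilSet hn w hw hsum h1 h2 i xi hxi xi' hxi'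
  exact ⟨hA, hB, by rw [hA, hB]⟩
end

section
/- An OWA mechanism (n ≥ 2) is not obviously manipulable (NOM) if and only if either (i) w_j = 1 for some index j, or (ii) w_1 = w_n = 0. NOM means that for each agent i, true peak x_i, and misreport x'_i, truth-telling is weakly better than misreporting both in the best case and in the worst case over the other agents' reports. -/
lemma owa_eq_of_monotone {n : ℕ} (w x : Fin n → ℝ) (σ : Equiv.Perm (Fin n))
    (h : Monotone (x ∘ σ)) : owa w x = ∑ j, w j * x (σ j) := by
  have h2 : x ∘ σ = x ∘ Tuple.sort x := Tuple.comp_sort_eq_comp_iff_monotone.mpr h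
  unfold owa
  refine Finset.sum_congr rfl fun j _ => ?_
  rw [show x (Tuple.sort x j) = (x ∘ Tuple.sort x) j from rfl, ← h2]; rfl

lemma sum_ite_single {n : ℕ} (w : Fin n → ℝ) (hsum : ∑ j, w j = 1)
    (c : Fin n) (rep t : ℝ) :
    ∑ j, w j * (if j = c then rep else t) = w c * rep + (1 - w c) * t := by
  have h1 : ∑ j ∈ Finset.univ.erase c, (w j * (if j = c then rep else t))
      = ∑ j ∈ Finset.univ.erase c, w j * t :=
    Finset.sum_congr rfl fun j hj => by rw [if_neg (Finset.ne_of_mem_erase hj)]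
  have h2 : w c + ∑ j ∈ Finset.univ.erase c, w j = 1 := by
    rw [Finset.add_sum_erase _ _ (Finset.mem_univ c), hsum]
  rw [← Finset.add_sum_erase _ _ (Finset.mem_univ c), if_pos rfl, h1, ← Finset.sum_mul]
  have h3 : ∑ j ∈ Finset.univ.erase c, w j = 1 - w c := by linarith
  rw [h3]

lemma comp_swap {n : ℕ} (i c : Fin n) (rep t : ℝ) :
    (fun j => if j = i then rep else t) ∘ (Equiv.swap i c) =
      fun j => if j = c then rep else t := by
  funext j
  simp only [Function.comp]
  by_cases hj : j = c
  · subst hj; simp [Equiv.swap_apply_right]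
  · rw [if_neg hj, if_neg]
    intro hc
    apply hj
    have := congrArg (Equiv.swap i c) hc
    rwa [Equiv.swap_apply_self, Equiv.swap_apply_left] at this

lemma owa_profile_le {n : ℕ} (hn : 0 < n) (w : Fin n → ℝ) (hsum : ∑ j, w j = 1)
    (i : Fin n) (rep t : ℝ) (ht : t ≤ rep) :
    owa w (fun j => if j = i then rep else t) =
      (1 - w ⟨n-1, by omega⟩) * t + w ⟨n-1, by omega⟩ * rep := by
  set iN : Fin n := ⟨n-1, by omega⟩ with hiN
  have hmono : Monotone ((fun j => if j = i then rep else t) ∘ (Equiv.swap i iN)) := by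
    rw [comp_swap]
    intro j k hjk
    by_cases hk : k = iN
    · subst hk; by_cases hj : j = iN <;> simp [hj, ht]
    · have hj : j ≠ iN := by
        intro h; subst h
        exact hk (le_antisymm (by simp only [hiN, Fin.le_def, Fin.val_mk]; have := k.isLt; omega) hjk)
      simp [hj, hk]
  rw [owa_eq_of_monotone _ _ _ hmono]
  have heq : ∀ j : Fin n, (fun j => if j = i then rep else t) (Equiv.swap i iN j)
      = if j = iN then rep else t := fun j => congrFun (comp_swap i iN rep t) j
  calc ∑ j, w j * (fun j => if j = i then rep else t) (Equiv.swap i iN j)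
      = ∑ j, w j * (if j = iN then rep else t) :=
        Finset.sum_congr rfl fun j _ => by rw [heq j]
    _ = w iN * rep + (1 - w iN) * t := sum_ite_single w hsum iN rep t
    _ = (1 - w iN) * t + w iN * rep := by ring

lemma owa_profile_ge {n : ℕ} (hn : 0 < n) (w : Fin n → ℝ) (hsum : ∑ j, w j = 1)
    (i : Fin n) (rep t : ℝ) (ht : rep ≤ t) :
    owa w (fun j => if j = i then rep else t) =
      w ⟨0, hn⟩ * rep + (1 - w ⟨0, hn⟩) * t := by
  set i0 : Fin n := ⟨0, hn⟩ with hi0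
  have hmono : Monotone ((fun j => if j = i then rep else t) ∘ (Equiv.swap i i0)) := by
    rw [comp_swap]
    intro j k hjk
    by_cases hj : j = i0
    · subst hj; by_cases hk : k = i0 <;> simp [hk, ht]
    · have hk : k ≠ i0 := by
        intro h; subst h
        exact hj (le_antisymm hjk (by simp only [hi0, Fin.le_def, Fin.val_mk]; omega))
      simp [hj, hk]
  rw [owa_eq_of_monotone _ _ _ hmono]
  have heq : ∀ j : Fin n, (fun j => if j = i then rep else t) (Equiv.swap i i0 j)
      = if j = i0 then rep else t := fun j => congrFun (comp_swap i i0 rep t) j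
  calc ∑ j, w j * (fun j => if j = i then rep else t) (Equiv.swap i i0 j)
      = ∑ j, w j * (if j = i0 then rep else t) :=
        Finset.sum_congr rfl fun j _ => by rw [heq j]
    _ = w i0 * rep + (1 - w i0) * t := sum_ite_single w hsum i0 rep t

lemma owa_mem_Icc {n : ℕ} (hn : 0 < n) (w : Fin n → ℝ)
    (hw : ∀ j, w j ∈ Set.Icc (0:ℝ) 1) (hsum : ∑ j, w j = 1)
    (i : Fin n) (x : Fin n → ℝ) (hx : ∀ j, x j ∈ Set.Icc (0:ℝ) 1) :
    owa w x ∈ Set.Icc (w ⟨n-1, by omega⟩ * x i) (1 - w ⟨0, hn⟩ * (1 - x i)) := by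
  set σ := Tuple.sort x with hσ
  set y : Fin n → ℝ := x ∘ σ with hy
  set iN : Fin n := ⟨n-1, by omega⟩
  set i0 : Fin n := ⟨0, hn⟩
  have hmono : Monotone y := Tuple.monotone_sort x
  have hyIcc : ∀ j, y j ∈ Set.Icc (0:ℝ) 1 := fun j => hx _
  have howa : owa w x = ∑ j, w j * y j := rfl
  have hxi : x i = y (σ.symm i) := by simp [hy]
  have hlast : x i ≤ y iN := by
    rw [hxi]
    exact hmono (by simp only [iN, Fin.le_def, Fin.val_mk]; have := (σ.symm i).isLt; omega)
  have hfirst : y i0 ≤ x i := by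
    rw [hxi]; exact hmono (by simp only [i0, Fin.le_def, Fin.val_mk]; omega)
  constructor
  · calc w iN * x i ≤ w iN * y iN := mul_le_mul_of_nonneg_left hlast (hw _).1
      _ ≤ ∑ j, w j * y j :=
        Finset.single_le_sum (fun j _ => mul_nonneg (hw j).1 (hyIcc j).1) (Finset.mem_univ _)
      _ = owa w x := howa.symm
  · have hsplit : ∑ j, w j * y j = w i0 * y i0 + ∑ j ∈ Finset.univ.erase i0, w j * y j :=
      (Finset.add_sum_erase _ _ (Finset.mem_univ i0)).symm
    have hle : ∑ j ∈ Finset.univ.erase i0, w j * y j ≤ ∑ j ∈ Finset.univ.erase i0, w j :=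
      Finset.sum_le_sum fun j _ => mul_le_of_le_one_right (hw j).1 (hyIcc j).2
    have herase : ∑ j ∈ Finset.univ.erase i0, w j = 1 - w i0 := by
      have := Finset.add_sum_erase Finset.univ w (Finset.mem_univ i0)
      rw [hsum] at this; linarith
    have h1 : w i0 * y i0 ≤ w i0 * x i := mul_le_mul_of_nonneg_left hfirst (hw _).1
    rw [howa, hsplit]
    nlinarith [herase, hle, h1]

lemma owa_surj {n : ℕ} (hn : 0 < n) (w : Fin n → ℝ) (hsum : ∑ j, w j = 1)
    (i : Fin n) (rep : ℝ) (hrep : rep ∈ Set.Icc (0:ℝ) 1) (v : ℝ)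
    (hv : v ∈ Set.Icc (w ⟨n-1, by omega⟩ * rep) (1 - w ⟨0, hn⟩ * (1 - rep))) :
    ∃ x : Fin n → ℝ, (∀ j, x j ∈ Set.Icc (0:ℝ) 1) ∧ x i = rep ∧ owa w x = v := by
  set A := w ⟨n-1, by omega⟩ with hA
  set B := w ⟨0, hn⟩ with hB
  set φ : ℝ → ℝ := fun t => A*rep + (1-A)*(min t rep) + (1-B)*(max t rep - rep) with hφ
  have hcont : Continuous φ := by
    apply Continuous.add
    apply Continuous.add continuous_const
    · exact continuous_const.mul (continuous_id.min continuous_const)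
    · exact continuous_const.mul ((continuous_id.max continuous_const).sub continuous_const)
  have h0 : φ 0 = A * rep := by
    simp only [hφ, min_eq_left hrep.1, max_eq_right hrep.1]; ring
  have h1 : φ 1 = 1 - B * (1 - rep) := by
    simp only [hφ, min_eq_right hrep.2, max_eq_left hrep.2]; ring
  have hIVT := intermediate_value_Icc (by norm_num : (0:ℝ) ≤ 1) hcont.continuousOn
  obtain ⟨t, ht01, hφt⟩ := hIVT (by rw [h0, h1]; exact hv)
  refine ⟨fun j => if j = i then rep else t, ?_, by simp, ?_⟩
  · intro j; by_cases h : j = i <;> simp [h, hrep.1, hrep.2, ht01.1, ht01.2]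
  · rcases le_total t rep with h | h
    · rw [owa_profile_le hn w hsum i rep t h, ← hA]
      rw [hφ] at hφt
      simp only [min_eq_left h, max_eq_right h] at hφt
      nlinarith [hφt]
    · rw [owa_profile_ge hn w hsum i rep t h, ← hB]
      rw [hφ] at hφt
      simp only [min_eq_right h, max_eq_left h] at hφt
      nlinarith [hφt]

lemma utilSet_eq {n : ℕ} (hn : 0 < n) (w : Fin n → ℝ)
    (hw : ∀ j, w j ∈ Set.Icc (0:ℝ) 1) (hsum : ∑ j, w j = 1)
    (i : Fin n) (peak rep : ℝ) (hrep : rep ∈ Set.Icc (0:ℝ) 1) :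
    utilSet w i peak rep = (fun v => 1 - |peak - v|) ''
      Set.Icc (w ⟨n-1, by omega⟩ * rep) (1 - w ⟨0, hn⟩ * (1 - rep)) := by
  ext u
  constructor
  · rintro ⟨x, hx, hxi, rfl⟩
    refine ⟨owa w x, ?_, rfl⟩
    have := owa_mem_Icc hn w hw hsum i x hx
    rwa [hxi] at this
  · rintro ⟨v, hv, rfl⟩
    obtain ⟨x, hx, hxi, hov⟩ := owa_surj hn w hsum i rep hrep v hv
    exact ⟨x, hx, hxi, by rw [hov]⟩

lemma sInf_util_image (peak L H : ℝ) (hLH : L ≤ H) :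
    sInf ((fun v => 1 - |peak - v|) '' Set.Icc L H)
      = 1 - max |peak - L| |peak - H| := by
  have hbound : ∀ u ∈ (fun v => 1 - |peak - v|) '' Set.Icc L H,
      1 - max |peak - L| |peak - H| ≤ u := by
    rintro _ ⟨v, hv, rfl⟩
    have : |peak - v| ≤ max |peak - L| |peak - H| := by
      rcases le_total v peak with h | h
      · refine le_max_of_le_left ?_
        rw [abs_of_nonneg (by linarith)]
        have h2 : peak - v ≤ peak - L := by linarith [hv.1]
        exact h2.trans (le_abs_self _)
      · refine le_max_of_le_right ?_
        rw [abs_of_nonpos (by linarith), neg_sub]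
        have h2 : v - peak ≤ H - peak := by linarith [hv.2]
        refine h2.trans ?_
        rw [abs_sub_comm]
        exact le_abs_self _
    simp only
    linarith
  have hmem : 1 - max |peak - L| |peak - H| ∈ (fun v => 1 - |peak - v|) '' Set.Icc L H := by
    rcases le_total |peak - H| |peak - L| with h | h
    · exact ⟨L, ⟨le_refl L, hLH⟩, by rw [max_eq_left h]⟩
    · exact ⟨H, ⟨hLH, le_refl H⟩, by rw [max_eq_right h]⟩
  exact le_antisymm (csInf_le ⟨_, hbound⟩ hmem) (le_csInf ⟨_, hmem⟩ hbound)

theorem owa_NOM_iff {n : ℕ} (hn : 2 ≤ n)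
    (w : Fin n → ℝ) (hw : ∀ j, w j ∈ Set.Icc (0:ℝ) 1) (hsum : ∑ j, w j = 1) :
    (∀ i : Fin n, ∀ xi ∈ Set.Icc (0:ℝ) 1, ∀ xi' ∈ Set.Icc (0:ℝ) 1,
        sSup (utilSet w i xi xi') ≤ sSup (utilSet w i xi xi) ∧
        sInf (utilSet w i xi xi') ≤ sInf (utilSet w i xi xi)) ↔
      ((∃ j, w j = 1) ∨ (w ⟨0, by omega⟩ = 0 ∧ w ⟨n - 1, by omega⟩ = 0)) := by
  have hn0 : 0 < n := by omega
  have pN : n - 1 < n := by omega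
  have hne : (⟨0, hn0⟩ : Fin n) ≠ ⟨n-1, pN⟩ := by
    simp only [ne_eq, Fin.mk.injEq]; omega
  have hpair : w ⟨0, hn0⟩ + w ⟨n-1, pN⟩ ≤ 1 := by
    have h1 : ({⟨0, hn0⟩, ⟨n-1, pN⟩} : Finset (Fin n)) ⊆ Finset.univ := Finset.subset_univ _
    have h2 := Finset.sum_le_sum_of_subset_of_nonneg h1 (fun m _ _ => (hw m).1)
    rwa [Finset.sum_pair hne, hsum] at h2
  have hIccne : ∀ rep ∈ Set.Icc (0:ℝ) 1,
      w ⟨n-1, pN⟩ * rep ≤ 1 - w ⟨0, hn0⟩ * (1 - rep) := by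
    intro rep hrep
    nlinarith [mul_nonneg (hw ⟨n-1, pN⟩).1 (by linarith [hrep.2] : (0:ℝ) ≤ 1 - rep),
      mul_nonneg (hw ⟨0, hn0⟩).1 hrep.1, hpair]
  have hInf : ∀ (i : Fin n) (peak : ℝ), ∀ rep ∈ Set.Icc (0:ℝ) 1,
      sInf (utilSet w i peak rep)
        = 1 - max |peak - w ⟨n-1, pN⟩ * rep| |peak - (1 - w ⟨0, hn0⟩ * (1 - rep))| := by
    intro i peak rep hrep
    rw [utilSet_eq hn0 w hw hsum i peak rep hrep,
      sInf_util_image peak _ _ (hIccne rep hrep)]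
  have hSup : ∀ (i : Fin n), ∀ xi ∈ Set.Icc (0:ℝ) 1, ∀ rep ∈ Set.Icc (0:ℝ) 1,
      sSup (utilSet w i xi rep) ≤ sSup (utilSet w i xi xi) := by
    intro i xi hxi rep hrep
    have hub : ∀ s : ℝ, ∀ u ∈ utilSet w i xi s, u ≤ 1 := by
      rintro s u ⟨x, hx, hxi', rfl⟩
      have := abs_nonneg (xi - owa w x); linarith
    have hone : (1:ℝ) ∈ utilSet w i xi xi := by
      obtain ⟨x, hx, hxe, hov⟩ := owa_surj hn0 w hsum i xi hxi xi
        ⟨by nlinarith [(hw ⟨n-1, pN⟩).2, hxi.1],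
         by nlinarith [(hw ⟨0, hn0⟩).2, hxi.2]⟩
      exact ⟨x, hx, hxe, by rw [hov, sub_self, abs_zero, sub_zero]⟩
    have hnem : (utilSet w i xi rep).Nonempty := by
      obtain ⟨x, hx, hxe, hov⟩ := owa_surj hn0 w hsum i rep hrep (w ⟨n-1, pN⟩ * rep)
        ⟨le_refl _, hIccne rep hrep⟩
      exact ⟨_, x, hx, hxe, rfl⟩
    calc sSup (utilSet w i xi rep) ≤ 1 := csSup_le hnem (hub rep)
      _ ≤ sSup (utilSet w i xi xi) := le_csSup ⟨1, hub xi⟩ hone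
  constructor
  · -- NOM → condition
    intro hNOM
    by_contra hc
    push_neg at hc
    obtain ⟨hno1, hnz⟩ := hc
    have hA1 : w ⟨n-1, pN⟩ < 1 := lt_of_le_of_ne (hw _).2 (hno1 _)
    have hB1 : w ⟨0, hn0⟩ < 1 := lt_of_le_of_ne (hw _).2 (hno1 _)
    by_cases hA0 : w ⟨n-1, pN⟩ = 0
    · -- then B > 0
      have hB0 : w ⟨0, hn0⟩ ≠ 0 := by
        intro h
        exact hnz h hA0
      have hBpos : 0 < w ⟨0, hn0⟩ := lt_of_le_of_ne (hw _).1 (Ne.symm hB0)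
      set B := w ⟨0, hn0⟩ with hB
      have h2B : (0:ℝ) < 2 - B := by linarith
      set xi : ℝ := (1-B)/(2*(2-B)) with hxidef
      have hxipos : 0 < xi := div_pos (by linarith) (by linarith)
      have hxieq : xi * (2*(2-B)) = 1 - B := by
        rw [hxidef]
        exact div_mul_cancel₀ _ (by positivity)
      have hxile : xi ≤ 1 - B := by nlinarith [hxipos, h2B]
      have hxi1 : xi ≤ 1 := by linarith [(hw ⟨0, hn0⟩).1]
      have h := (hNOM ⟨0, hn0⟩ xi ⟨le_of_lt hxipos, hxi1⟩ 0 ⟨le_refl 0, zero_le_one⟩).2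
      rw [hInf _ xi 0 ⟨le_refl 0, zero_le_one⟩, hInf _ xi xi ⟨le_of_lt hxipos, hxi1⟩] at h
      rw [hA0] at h
      have e1 : |xi - 0 * (0:ℝ)| = xi := by
        rw [zero_mul, sub_zero, abs_of_nonneg (le_of_lt hxipos)]
      have e2 : |xi - (1 - B * (1 - 0))| = 1 - B - xi := by
        rw [sub_zero, mul_one, abs_of_nonpos (by linarith), neg_sub]
      have e3 : |xi - (1 - B * (1 - xi))| = (1-B)*(1-xi) := by
        rw [abs_of_nonpos (by nlinarith [(hw ⟨0, hn0⟩).2]), neg_sub]; ring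
      have hC : (1-B)*(1-xi) ≤ max |xi - 0 * xi| |xi - (1 - B * (1 - xi))| :=
        e3 ▸ le_max_right _ _
      have hD : max |xi - 0 * (0:ℝ)| |xi - (1 - B * (1 - 0))| < (1-B)*(1-xi) := by
        rw [e1, e2]
        refine max_lt ?_ ?_
        · nlinarith [mul_pos hxipos h2B]
        · nlinarith [mul_pos hBpos hxipos]
      linarith
    · have hApos : 0 < w ⟨n-1, pN⟩ := lt_of_le_of_ne (hw _).1 (Ne.symm hA0)
      set A := w ⟨n-1, pN⟩ with hA
      have h2A : (0:ℝ) < 2 - A := by linarith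
      set t : ℝ := max A (1/(2-A)) with htdef
      have htA : A ≤ t := le_max_left _ _
      have hts : 1/(2-A) ≤ t := le_max_right _ _
      have ht1 : t < 1 := max_lt hA1 (by rw [div_lt_one h2A]; linarith)
      set xi : ℝ := (1+t)/2 with hxidef
      have hxit : t < xi := by rw [hxidef]; linarith
      have hxi1 : xi < 1 := by rw [hxidef]; linarith
      have hxi0 : 0 ≤ xi := by
        have : (0:ℝ) ≤ t := le_trans (hw _).1 htA
        rw [hxidef]; linarith
      have hx2A : 1 < xi * (2-A) := by
        have h1 : 1/(2-A) < xi := lt_of_le_of_lt hts hxit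
        exact (div_lt_iff₀ h2A).1 h1
      have h := (hNOM ⟨0, hn0⟩ xi ⟨hxi0, le_of_lt hxi1⟩ 1 ⟨zero_le_one, le_refl 1⟩).2
      rw [hInf _ xi 1 ⟨zero_le_one, le_refl 1⟩, hInf _ xi xi ⟨hxi0, le_of_lt hxi1⟩] at h
      have e1 : |xi - A * 1| = xi - A := by
        rw [mul_one, abs_of_nonneg (by linarith)]
      have e2 : |xi - (1 - w ⟨0, hn0⟩ * (1 - 1))| = 1 - xi := by
        rw [sub_self, mul_zero, sub_zero, abs_of_nonpos (by linarith), neg_sub]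
      have e3 : |xi - A * xi| = (1-A)*xi := by
        rw [abs_of_nonneg (by nlinarith)]; ring
      have hC : (1-A)*xi ≤ max |xi - A * xi| |xi - (1 - w ⟨0, hn0⟩ * (1 - xi))| :=
        e3 ▸ le_max_left _ _
      have hD : max |xi - A * 1| |xi - (1 - w ⟨0, hn0⟩ * (1 - 1))| < (1-A)*xi := by
        rw [e1, e2]
        refine max_lt ?_ ?_
        · nlinarith [mul_pos hApos (sub_pos.2 hxi1)]
        · nlinarith
      linarith
  · -- condition → NOM
    intro hcond i xi hxi xi' hxi'
    refine ⟨hSup i xi hxi xi' hxi', ?_⟩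
    rw [hInf i xi xi' hxi', hInf i xi xi hxi]
    rcases hcond with ⟨j, hj⟩ | ⟨hB0, hA0⟩
    · -- some weight is 1; all others are 0
      have hz : ∑ k ∈ Finset.univ.erase j, w k = 0 := by
        have := Finset.add_sum_erase Finset.univ w (Finset.mem_univ j)
        rw [hsum, hj] at this; linarith
      have hall : ∀ k, k ≠ j → w k = 0 := fun k hk =>
        (Finset.sum_eq_zero_iff_of_nonneg (fun m _ => (hw m).1)).1 hz k
          (Finset.mem_erase.2 ⟨hk, Finset.mem_univ k⟩)
      by_cases hjN : j = ⟨n-1, pN⟩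
      · -- A = 1, B = 0
        have hA1' : w ⟨n-1, pN⟩ = 1 := hjN ▸ hj
        have hB0' : w ⟨0, hn0⟩ = 0 := hall _ (by rw [hjN]; exact hne)
        rw [hA1', hB0']
        have hmr : max |xi - 1 * xi| |xi - (1 - 0 * (1 - xi))| = |xi - 1| := by
          rw [one_mul, sub_self, abs_zero, zero_mul, sub_zero]
          exact max_eq_right (abs_nonneg _)
        have e : |xi - (1 - 0 * (1 - xi'))| = |xi - 1| := by rw [zero_mul, sub_zero]
        rw [hmr, e]
        have := le_max_right |xi - 1 * xi'| |xi - 1|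
        linarith
      · by_cases hj0 : j = ⟨0, hn0⟩
        · -- B = 1, A = 0
          have hB1' : w ⟨0, hn0⟩ = 1 := hj0 ▸ hj
          have hA0' : w ⟨n-1, pN⟩ = 0 := hall _ (by rw [hj0]; exact hne.symm)
          rw [hB1', hA0']
          have hmr : max |xi - 0 * xi| |xi - (1 - 1 * (1 - xi))| = |xi - 0| := by
            rw [one_mul, zero_mul, show (1:ℝ) - (1 - xi) = xi by ring, sub_self, abs_zero]
            exact max_eq_left (abs_nonneg _)
          have e : |xi - 0 * xi'| = |xi - 0| := by rw [zero_mul]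
          rw [hmr, e]
          have := le_max_left |xi - 0| |xi - (1 - 1 * (1 - xi'))|
          linarith
        · -- interior: A = B = 0
          have hA0' : w ⟨n-1, pN⟩ = 0 := hall _ (fun h => hjN h.symm)
          have hB0' : w ⟨0, hn0⟩ = 0 := hall _ (fun h => hj0 h.symm)
          rw [hA0', hB0']
          simp only [zero_mul, sub_zero]
          exact le_refl _
    · have hA0' : w ⟨n-1, pN⟩ = 0 := hA0
      have hB0' : w ⟨0, hn0⟩ = 0 := hB0
      rw [hA0', hB0']
      simp only [zero_mul, sub_zero]
      exact le_refl _
end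

section
/- An OWA mechanism satisfies IFS if and only if w_1 ≥ 1/n and w_n ≥ 1/n. IFS requires that for every profile x ∈ [0,1]^n and every agent i, |x_i − f(x)| ≤ 1 − 1/n. -/
theorem owa_IFS_iff {n : ℕ} (hn : 1 ≤ n)
    (w : Fin n → ℝ) (hw : ∀ j, w j ∈ Set.Icc (0:ℝ) 1) (hsum : ∑ j, w j = 1) :
    (∀ x : Fin n → ℝ, (∀ j, x j ∈ Set.Icc (0:ℝ) 1) →
        ∀ i : Fin n, |x i - owa w x| ≤ 1 - 1 / n) ↔
      (1 / (n:ℝ) ≤ w ⟨0, by omega⟩ ∧ 1 / (n:ℝ) ≤ w ⟨n - 1, by omega⟩) := by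
  set j0 : Fin n := ⟨0, by omega⟩ with hj0def
  set jn : Fin n := ⟨n - 1, by omega⟩ with hjndef
  have hle_j0 : ∀ j : Fin n, j0 ≤ j := by
    intro j; exact Fin.mk_le_of_le_val (Nat.zero_le _)
  have hle_jn : ∀ j : Fin n, j ≤ jn := by
    intro j
    have := j.isLt
    exact Fin.le_def.mpr (by simp [hjndef]; omega)
  constructor
  · intro h
    constructor
    · -- use x = (0,1,...,1) at position j0
      set x : Fin n → ℝ := fun j => if j = j0 then 0 else 1 with hxdef
      have hx : ∀ j, x j ∈ Set.Icc (0:ℝ) 1 := by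
        intro j; simp only [hxdef]; split <;> norm_num
      have hmono := Tuple.monotone_sort x
      have hk : Tuple.sort x j0 = j0 := by
        by_contra hne
        obtain ⟨k, hk⟩ := (Tuple.sort x).surjective j0
        have hmle := hmono (hle_j0 k)
        simp only [Function.comp_apply, hk] at hmle
        rw [show x (Tuple.sort x j0) = 1 from if_neg hne,
          show x j0 = 0 from if_pos rfl] at hmle
        linarith
      have howa : owa w x = 1 - w j0 := by
        unfold owa
        have : ∀ j : Fin n, w j * x (Tuple.sort x j)
            = w j - (if j = j0 then w j0 else 0) := by
          intro j
          rcases eq_or_ne j j0 with hj | hj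
          · subst hj
            rw [hk, if_pos rfl, show x j0 = 0 from if_pos rfl]; ring
          · have hs : Tuple.sort x j ≠ j0 := by
              intro hc
              exact hj ((Tuple.sort x).injective (by rw [hc, hk]))
            rw [if_neg hj, show x (Tuple.sort x j) = 1 from if_neg hs]; ring
        rw [Finset.sum_congr rfl fun j _ => this j, Finset.sum_sub_distrib, hsum,
          Finset.sum_ite_eq' Finset.univ j0 (fun _ => w j0)]
        simp
      have := h x hx j0
      rw [howa, show x j0 = 0 from if_pos rfl] at this
      have hwle := (hw j0).2
      rw [abs_le] at this
      linarith [this.1]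
    · -- use x = (1,0,...,0) with the 1 at position j0
      set x : Fin n → ℝ := fun j => if j = j0 then 1 else 0 with hxdef
      have hx : ∀ j, x j ∈ Set.Icc (0:ℝ) 1 := by
        intro j; simp only [hxdef]; split <;> norm_num
      have hmono := Tuple.monotone_sort x
      have hk : Tuple.sort x jn = j0 := by
        by_contra hne
        obtain ⟨k, hk⟩ := (Tuple.sort x).surjective j0
        have hmle := hmono (hle_jn k)
        simp only [Function.comp_apply, hk] at hmle
        rw [show x (Tuple.sort x jn) = 0 from if_neg hne,
          show x j0 = 1 from if_pos rfl] at hmle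
        linarith
      have howa : owa w x = w jn := by
        unfold owa
        have : ∀ j : Fin n, w j * x (Tuple.sort x j)
            = (if j = jn then w jn else 0) := by
          intro j
          rcases eq_or_ne j jn with hj | hj
          · subst hj
            rw [hk, if_pos rfl, show x j0 = 1 from if_pos rfl]; ring
          · have hs : Tuple.sort x j ≠ j0 := by
              intro hc
              exact hj ((Tuple.sort x).injective (by rw [hc, hk]))
            rw [if_neg hj, show x (Tuple.sort x j) = 0 from if_neg hs]; ring
        rw [Finset.sum_congr rfl fun j _ => this j,
          Finset.sum_ite_eq' Finset.univ jn (fun _ => w jn)]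
        simp
      have := h x hx j0
      rw [howa, show x j0 = 1 from if_pos rfl] at this
      have hwle := (hw jn).2
      rw [abs_le] at this
      linarith [this.2]
  · rintro ⟨h0, hn'⟩ x hx i
    have hmono := Tuple.monotone_sort x
    set σ := Tuple.sort x with hσ
    -- x i as a sorted value
    obtain ⟨k, hk⟩ := σ.surjective i
    have hxik : x i = x (σ k) := by rw [hk]
    -- bounds on x i
    have hxi_le : x i ≤ x (σ jn) := by
      rw [hxik]; exact hmono (hle_jn k)
    have hxi_ge : x (σ j0) ≤ x i := by
      rw [hxik]; exact hmono (hle_j0 k)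
    -- lower bound on owa via the top weight
    have hge : w jn * x (σ jn) ≤ owa w x := by
      unfold owa
      exact Finset.single_le_sum
        (fun j _ => mul_nonneg (hw j).1 (hx (σ j)).1) (Finset.mem_univ jn)
    -- upper bound on owa via the bottom weight
    have hle : owa w x ≤ w j0 * x (σ j0) + (1 - w j0) := by
      unfold owa
      rw [← Finset.add_sum_erase Finset.univ (fun j => w j * x (σ j))
        (Finset.mem_univ j0)]
      have h1 : ∑ j ∈ Finset.univ.erase j0, w j * x (σ j)
          ≤ ∑ j ∈ Finset.univ.erase j0, w j := by
        apply Finset.sum_le_sum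
        intro j _
        nlinarith [(hw j).1, (hx (σ j)).1, (hx (σ j)).2]
      have h2 : ∑ j ∈ Finset.univ.erase j0, w j = 1 - w j0 := by
        rw [Finset.sum_erase_eq_sub (Finset.mem_univ j0), hsum]
      linarith
    have hn1 : (1:ℝ) ≤ (n:ℝ) := by exact_mod_cast hn
    rw [abs_le]
    constructor
    · -- -(1 - 1/n) ≤ x i - owa, i.e. owa - x i ≤ 1 - 1/n
      have := (hx (σ j0)).1
      have := (hx (σ j0)).2
      have := (hw j0).2
      nlinarith
    · -- x i - owa ≤ 1 - 1/n
      have := (hx (σ jn)).1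
      have := (hx (σ jn)).2
      have := (hw jn).2
      nlinarith
end

section
/- The standard average mechanism f(x) = (1/n) ∑_i x_i satisfies proportional fairness: for every profile x ∈ [0,1]^n, every coalition S ⊆ N, and every agent i ∈ S, |x_i − f(x)| ≤ 1 − |S|/n + r, where r = max_{j∈S} x_j − min_{j∈S} x_j. -/
theorem average_proportional_fairness {n : ℕ} (hn : 0 < n)
    (x : Fin n → ℝ) (hx : ∀ j, x j ∈ Set.Icc (0:ℝ) 1)
    (S : Finset (Fin n)) (hS : S.Nonempty) (i : Fin n) (hi : i ∈ S) :
    |x i - (∑ j, x j) / n| ≤ 1 - (S.card : ℝ) / n + (S.sup' hS x - S.inf' hS x) := by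
  set r := S.sup' hS x - S.inf' hS x with hr
  have hn' : (0:ℝ) < n := by exact_mod_cast hn
  have hrpos : 0 ≤ r := by
    have := Finset.inf'_le x hi
    have := Finset.le_sup' x hi
    linarith
  have hcard : (S.card : ℝ) ≤ n := by
    exact_mod_cast (Finset.card_le_card (Finset.subset_univ S)).trans (by simp)
  have key : x i - (∑ j, x j) / n = (∑ j, (x i - x j)) / n := by
    rw [Finset.sum_sub_distrib, Finset.sum_const]
    simp [Finset.card_univ]
    field_simp
  rw [key, abs_div, abs_of_pos hn', div_le_iff₀ hn']
  have h1 : |∑ j, (x i - x j)| ≤ ∑ j, |x i - x j| := Finset.abs_sum_le_sum_abs _ _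
  have h2 : ∑ j, |x i - x j| = ∑ j ∈ S, |x i - x j| + ∑ j ∈ Sᶜ, |x i - x j| :=
    (Finset.sum_add_sum_compl S _).symm
  have h3 : ∑ j ∈ S, |x i - x j| ≤ S.card * r := by
    have := Finset.sum_le_card_nsmul S (fun j => |x i - x j|) r ?_
    · simpa [nsmul_eq_mul] using this
    · intro j hj
      have hi1 := Finset.inf'_le x hi
      have hi2 := Finset.le_sup' x hi
      have hj1 := Finset.inf'_le x hj
      have hj2 := Finset.le_sup' x hj
      rw [abs_le, hr]; constructor <;> linarith
  have h4 : ∑ j ∈ Sᶜ, |x i - x j| ≤ (n : ℝ) - S.card := by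
    have : ∑ j ∈ Sᶜ, |x i - x j| ≤ ∑ j ∈ Sᶜ, (1:ℝ) := by
      apply Finset.sum_le_sum
      intro j _
      have hxi := hx i
      have hxj := hx j
      simp only [Set.mem_Icc] at hxi hxj
      rw [abs_le]; constructor <;> linarith
    have hcc : ((Sᶜ : Finset (Fin n)).card : ℝ) = n - S.card := by
      rw [Finset.card_compl]
      have : S.card ≤ Fintype.card (Fin n) := Finset.card_le_univ S
      push_cast [Nat.cast_sub this]
      simp
    calc ∑ j ∈ Sᶜ, |x i - x j| ≤ ∑ j ∈ Sᶜ, (1:ℝ) := this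
      _ = (Sᶜ : Finset (Fin n)).card := by simp
      _ = (n : ℝ) - S.card := hcc
  have hsc : (0:ℝ) ≤ S.card := by positivity
  have hd : (S.card:ℝ)/n*n = S.card := div_mul_cancel₀ _ (ne_of_gt hn')
  nlinarith [mul_nonneg (sub_nonneg.2 hcard) hrpos]
end

section
/- An OWA mechanism satisfies proportional fairness if and only if w_j = 1/n for every j, i.e., if and only if it is the standard average mechanism. -/
lemma owa_monotone {n : ℕ} (w x : Fin n → ℝ) (hx : Monotone x) :
    owa w x = ∑ j, w j * x j := by
  have h : x ∘ Tuple.sort x = x :=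
    ((Tuple.comp_sort_eq_comp_iff_monotone (f := x) (σ := Equiv.refl _)).mpr
      (by simpa using hx)).symm
  unfold owa
  exact Finset.sum_congr rfl fun j _ => by
    rw [show x (Tuple.sort x j) = (x ∘ Tuple.sort x) j from rfl, h]

lemma owa_forward {n : ℕ} (hn : 0 < n)
    (w : Fin n → ℝ) (hw : ∀ j, w j ∈ Set.Icc (0:ℝ) 1) (hsum : ∑ j, w j = 1)
    (hPF : ∀ x : Fin n → ℝ, (∀ j, x j ∈ Set.Icc (0:ℝ) 1) →
        ∀ S : Finset (Fin n), ∀ hS : S.Nonempty, ∀ i ∈ S,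
          |x i - owa w x| ≤ 1 - (S.card : ℝ) / n + (S.sup' hS x - S.inf' hS x)) :
    ∀ j, w j = 1 / n := by
  have hn' : (n:ℝ) ≠ 0 := Nat.cast_ne_zero.mpr hn.ne'
  have key : ∀ k ≤ n, (∑ j ∈ Finset.univ.filter (fun j : Fin n => k ≤ (j:ℕ)), w j)
      = ((n:ℝ) - k) / n := by
    intro k hk
    rcases Nat.eq_zero_or_pos k with rfl | hk1
    · have h0 : Finset.univ.filter (fun j : Fin n => 0 ≤ (j:ℕ)) = Finset.univ := by simp
      rw [h0, hsum]
      push_cast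
      rw [sub_zero, div_self hn']
    rcases eq_or_lt_of_le hk with heq | hk2
    · have h0 : Finset.univ.filter (fun j : Fin n => k ≤ (j:ℕ)) = ∅ :=
        Finset.filter_false_of_mem (fun j _ => by have := j.isLt; omega)
      rw [h0, Finset.sum_empty, heq]
      simp
    · -- 1 ≤ k < n
      set x : Fin n → ℝ := fun j => if (j:ℕ) < k then 0 else 1 with hx
      have hmono : Monotone x := by
        intro a b hab
        simp only [hx]
        have hab' : (a:ℕ) ≤ b := hab
        split_ifs <;> first | (exfalso; omega) | norm_num
      have hxIcc : ∀ j, x j ∈ Set.Icc (0:ℝ) 1 := by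
        intro j; simp only [hx]; split_ifs <;> constructor <;> norm_num
      have howa : owa w x = ∑ j ∈ Finset.univ.filter (fun j : Fin n => k ≤ (j:ℕ)), w j := by
        rw [owa_monotone w x hmono, Finset.sum_filter]
        refine Finset.sum_congr rfl fun j _ => ?_
        simp only [hx]
        split_ifs <;> first | (exfalso; omega) | ring
      have hub : (∑ j ∈ Finset.univ.filter (fun j : Fin n => k ≤ (j:ℕ)), w j)
          ≤ ((n:ℝ) - k) / n := by
        set S := Finset.univ.filter (fun j : Fin n => (j:ℕ) < k) with hS
        have hcard : S.card = k := by
          rw [hS, ← Fintype.card_subtype]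
          simp [Fintype.card_fin_lt_of_le hk]
        have hi : (⟨0, hn⟩ : Fin n) ∈ S := by simp [hS, hk1]
        have hne : S.Nonempty := ⟨_, hi⟩
        have hconst : ∀ j ∈ S, x j = 0 := by
          intro j hj; simp only [hS, Finset.mem_filter] at hj; simp [hx, hj.2]
        have hsup : S.sup' hne x = 0 := by
          rw [Finset.sup'_congr hne rfl hconst]; exact Finset.sup'_const hne 0
        have hinf : S.inf' hne x = 0 := by
          rw [Finset.inf'_congr hne rfl hconst]; exact Finset.inf'_const hne 0
        have h := hPF x hxIcc S hne _ hi
        rw [howa, hsup, hinf, hcard, hconst _ hi] at h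
        rw [abs_sub_comm] at h
        have h0 : |∑ j ∈ Finset.univ.filter (fun j : Fin n => k ≤ (j:ℕ)), w j|
            ≤ 1 - (k:ℝ)/n := by simpa using h
        have h2 := (abs_le.mp h0).2
        rw [sub_div, div_self hn']
        linarith
      have hlb : ((n:ℝ) - k) / n
          ≤ ∑ j ∈ Finset.univ.filter (fun j : Fin n => k ≤ (j:ℕ)), w j := by
        set S := Finset.univ.filter (fun j : Fin n => k ≤ (j:ℕ)) with hS
        have hcard : S.card = n - k := by
          have hlt : (Finset.univ.filter (fun j : Fin n => (j:ℕ) < k)).card = k := by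
            rw [← Fintype.card_subtype]
            simp [Fintype.card_fin_lt_of_le hk]
          have hadd := Finset.card_filter_add_card_filter_not
            (s := (Finset.univ : Finset (Fin n))) (p := fun j : Fin n => k ≤ (j:ℕ))
          simp only [not_le, Finset.card_univ, Fintype.card_fin] at hadd
          rw [hS]
          omega
        have hi : (⟨k, hk2⟩ : Fin n) ∈ S := by simp [hS]
        have hne : S.Nonempty := ⟨_, hi⟩
        have hconst : ∀ j ∈ S, x j = 1 := by
          intro j hj; simp only [hS, Finset.mem_filter] at hj; simp [hx, Nat.not_lt.mpr hj.2]
        have hsup : S.sup' hne x = 1 := by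
          rw [Finset.sup'_congr hne rfl hconst]; exact Finset.sup'_const hne 1
        have hinf : S.inf' hne x = 1 := by
          rw [Finset.inf'_congr hne rfl hconst]; exact Finset.inf'_const hne 1
        have h := hPF x hxIcc S hne _ hi
        rw [howa, hsup, hinf, hcard, hconst _ hi] at h
        have hcast : ((n - k : ℕ) : ℝ) = (n:ℝ) - k := by
          rw [Nat.cast_sub hk]
        rw [hcast] at h
        have h0 : |1 - ∑ j ∈ S, w j| ≤ 1 - ((n:ℝ)-k)/n := by simpa using h
        have h2 := (abs_le.mp h0).2
        rw [hS] at h2 ⊢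
        linarith
      linarith
  intro j
  have h1 : (∑ i ∈ Finset.univ.filter (fun i : Fin n => (j:ℕ) ≤ (i:ℕ)), w i)
      - (∑ i ∈ Finset.univ.filter (fun i : Fin n => (j:ℕ) + 1 ≤ (i:ℕ)), w i) = w j := by
    have hset : Finset.univ.filter (fun i : Fin n => (j:ℕ) ≤ (i:ℕ)) =
        insert j (Finset.univ.filter (fun i : Fin n => (j:ℕ) + 1 ≤ (i:ℕ))) := by
      ext i
      simp only [Finset.mem_filter, Finset.mem_univ, true_and, Finset.mem_insert, Fin.ext_iff]
      omega
    have hnot : j ∉ Finset.univ.filter (fun i : Fin n => (j:ℕ) + 1 ≤ (i:ℕ)) := by simp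
    rw [hset, Finset.sum_insert hnot]
    ring
  rw [key _ (le_of_lt j.isLt), key _ j.isLt] at h1
  rw [← h1]
  push_cast
  field_simp
  ring

lemma owa_backward {n : ℕ} (hn : 0 < n) (w : Fin n → ℝ) (hwavg : ∀ j, w j = 1 / n) :
    ∀ x : Fin n → ℝ, (∀ j, x j ∈ Set.Icc (0:ℝ) 1) →
        ∀ S : Finset (Fin n), ∀ hS : S.Nonempty, ∀ i ∈ S,
          |x i - owa w x| ≤ 1 - (S.card : ℝ) / n + (S.sup' hS x - S.inf' hS x) := by
  intro x hx S hS i hi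
  have hn' : (n:ℝ) ≠ 0 := Nat.cast_ne_zero.mpr hn.ne'
  have hnpos : (0:ℝ) < n := Nat.cast_pos.mpr hn
  have howa : owa w x = (∑ j, x j) / n := by
    unfold owa
    simp only [hwavg]
    rw [Equiv.sum_comp (Tuple.sort x) x |>.symm]
    rw [Finset.sum_div]
    exact Finset.sum_congr rfl fun j _ => by ring
  set r := S.sup' hS x - S.inf' hS x with hr
  have hr0 : 0 ≤ r := by
    rw [hr]
    linarith [Finset.inf'_le x hi, Finset.le_sup' x hi]
  have hkey : x i - owa w x = (∑ j, (x i - x j)) / n := by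
    rw [howa, Finset.sum_sub_distrib, Finset.sum_const, Finset.card_univ, Fintype.card_fin]
    field_simp
    ring
  have habs : |x i - owa w x| ≤ (∑ j, |x i - x j|) / n := by
    rw [hkey, abs_div, abs_of_pos hnpos]
    gcongr
    exact Finset.abs_sum_le_sum_abs _ _
  have hsplit : ∑ j, |x i - x j| = (∑ j ∈ S, |x i - x j|) + ∑ j ∈ Sᶜ, |x i - x j| :=
    (Finset.sum_add_sum_compl S _).symm
  have hbS : ∑ j ∈ S, |x i - x j| ≤ (S.card : ℝ) * r := by
    calc ∑ j ∈ S, |x i - x j| ≤ ∑ _j ∈ S, r := by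
          refine Finset.sum_le_sum fun j hj => ?_
          rw [abs_le]
          constructor <;>
            linarith [Finset.inf'_le x hj, Finset.le_sup' x hi,
              Finset.le_sup' x hj, Finset.inf'_le x hi]
      _ = (S.card : ℝ) * r := by rw [Finset.sum_const, nsmul_eq_mul]
  have hbC : ∑ j ∈ Sᶜ, |x i - x j| ≤ (Sᶜ.card : ℝ) := by
    calc ∑ j ∈ Sᶜ, |x i - x j| ≤ ∑ _j ∈ Sᶜ, (1:ℝ) := by
          refine Finset.sum_le_sum fun j _ => ?_
          rcases hx i with ⟨hi0, hi1⟩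
          rcases hx j with ⟨hj0, hj1⟩
          rw [abs_le]
          constructor <;> linarith
      _ = Sᶜ.card := by simp
  have hSn : S.card ≤ n := by
    have := Finset.card_le_univ S
    simpa using this
  have hcard : (Sᶜ.card : ℝ) = n - S.card := by
    rw [Finset.card_compl]
    simp [Nat.cast_sub hSn]
  have hSn' : (S.card : ℝ) ≤ n := by exact_mod_cast hSn
  calc |x i - owa w x| ≤ (∑ j, |x i - x j|) / n := habs
    _ ≤ ((S.card : ℝ) * r + ((n:ℝ) - S.card)) / n := by
        rw [hsplit]
        rw [hcard] at hbC
        gcongr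
    _ ≤ 1 - (S.card : ℝ) / n + r := by
        rw [add_div, sub_div, div_self hn']
        have h1 : (S.card : ℝ) * r / n ≤ r := by
          rw [div_le_iff₀ hnpos]
          nlinarith
        linarith

theorem owa_PF_iff_average {n : ℕ} (hn : 0 < n)
    (w : Fin n → ℝ) (hw : ∀ j, w j ∈ Set.Icc (0:ℝ) 1) (hsum : ∑ j, w j = 1) :
    (∀ x : Fin n → ℝ, (∀ j, x j ∈ Set.Icc (0:ℝ) 1) →
        ∀ S : Finset (Fin n), ∀ hS : S.Nonempty, ∀ i ∈ S,
          |x i - owa w x| ≤ 1 - (S.card : ℝ) / n + (S.sup' hS x - S.inf' hS x)) ↔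
      ∀ j, w j = 1 / n := by
  exact ⟨owa_forward hn w hw hsum, owa_backward hn w⟩
end
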